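/- With the notation above, the Hessian of J_k at a critical point x is block diagonal with, for each i, block ρᵢ(x)Eᵢ + 2(Eᵢx̂)(Eᵢx̂)ᵀ in vectorized coordinates; at a critical point where the block Eᵢx = 0, the corresponding Hessian block is −yᵢEᵢ, which is negative definite on the coordinates indexed by Nᵢ. -/

import Mathlib

open Matrix

/-- Residual `ρᵢ(x) = Σ_{j ∈ Mᵢ} xⱼ² − yᵢ` in vectorized coordinates. -/
def stmt7Rho {p q : ℕ} (M : Fin q → Finset (Fin p)) (y : Fin q → ℝ)
    (i : Fin q) (x : Fin p → ℝ) : ℝ :=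
  (∑ j ∈ M i, (x j)^2) - y i

/-- `J_k(x) = (1/4) Σᵢ ρᵢ(x)²` in vectorized coordinates. -/
noncomputable def stmt7J {p q : ℕ} (M : Fin q → Finset (Fin p)) (y : Fin q → ℝ)
    (x : Fin p → ℝ) : ℝ :=
  (1/4 : ℝ) * ∑ i, (stmt7Rho M y i x)^2

/-- The claimed block-diagonal Hessian, with `i`-th block `ρᵢ(x)Eᵢ + 2(Eᵢx)(Eᵢx)ᵀ`. -/
def stmt7Hess {p q : ℕ} (M : Fin q → Finset (Fin p)) (y : Fin q → ℝ)
    (x : Fin p → ℝ) : Matrix (Fin p) (Fin p) ℝ :=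
  Matrix.of fun j l => ∑ i,
    if j ∈ M i ∧ l ∈ M i then
      (stmt7Rho M y i x) * (if j = l then 1 else 0) + 2 * x j * x l
    else 0

private lemma stmt7_quadD (A B C s : ℝ) :
    HasDerivAt (fun t : ℝ => A + 2*B*t + C*t^2) (2*B + 2*C*s) s := by
  have h := ((hasDerivAt_const s A).add ((hasDerivAt_id s).const_mul (2*B))).add
      ((hasDerivAt_pow 2 s).const_mul C)
  refine h.congr_deriv ?_
  push_cast; ring

private lemma stmt7_iterD {q : ℕ} (A B C : Fin q → ℝ) :
      iteratedDeriv 2 (fun t : ℝ => (1/4 : ℝ) * ∑ i, (A i + 2*B i*t + C i*t^2)^2) 0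
        = ∑ i, (A i * C i + 2 * (B i)^2) := by
  have hd1 : ∀ s : ℝ, HasDerivAt (fun t : ℝ => (1/4:ℝ)*∑ i, (A i + 2*B i*t + C i*t^2)^2)
      ((1/4:ℝ)*∑ i, 2*(A i + 2*B i*s + C i*s^2)*(2*B i + 2*C i*s)) s := by
    intro s
    refine HasDerivAt.const_mul _ (HasDerivAt.fun_sum fun i _ => ?_)
    have h := (stmt7_quadD (A i) (B i) (C i) s).pow 2
    refine h.congr_deriv ?_
    push_cast; ring
  have hderiv : deriv (fun t : ℝ => (1/4:ℝ)*∑ i, (A i + 2*B i*t + C i*t^2)^2)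
      = fun s : ℝ => (1/4:ℝ)*∑ i, 2*(A i + 2*B i*s + C i*s^2)*(2*B i + 2*C i*s) :=
    funext fun s => (hd1 s).deriv
  have hd2 : HasDerivAt (fun s : ℝ => (1/4:ℝ)*∑ i, 2*(A i + 2*B i*s + C i*s^2)*(2*B i + 2*C i*s))
      ((1/4:ℝ)*∑ i, (8*(B i)^2 + 4*(A i)*(C i))) 0 := by
    refine HasDerivAt.const_mul _ (HasDerivAt.fun_sum fun i _ => ?_)
    have hp := (stmt7_quadD (A i) (B i) (C i) 0).const_mul 2
    have hl : HasDerivAt (fun t : ℝ => 2*B i + 2*C i*t) (2*C i) 0 := by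
      have := ((hasDerivAt_id (0:ℝ)).const_mul (2*C i)).const_add (2*B i)
      simpa using this
    have h := hp.mul hl
    refine h.congr_deriv ?_
    ring
  rw [iteratedDeriv_succ, iteratedDeriv_one, hderiv]
  rw [hd2.deriv, Finset.mul_sum]
  exact Finset.sum_congr rfl fun i _ => by ring

/-- The Hessian of `J_k` is block diagonal with blocks
`ρᵢ(x)Eᵢ + 2(Eᵢx)(Eᵢx)ᵀ`; at a critical point where the `i`-th block of `x` vanishes, the
corresponding block is `−yᵢEᵢ`, negative definite on the coordinates indexed by `Nᵢ`. -/
theorem stmt7 {p q : ℕ} (M : Fin q → Finset (Fin p))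
    (hdisj : ∀ i j : Fin q, i ≠ j → Disjoint (M i) (M j))
    (y : Fin q → ℝ) (hy : ∀ i, 0 < y i) :
    -- the second directional derivative of `J_k` is the quadratic form of `stmt7Hess`
    (∀ x v : Fin p → ℝ,
      iteratedDeriv 2 (fun s : ℝ => stmt7J M y (x + s • v)) 0
        = v ⬝ᵥ (stmt7Hess M y x) *ᵥ v) ∧
    -- block diagonality: entries outside the diagonal blocks vanish
    (∀ x : Fin p → ℝ, ∀ j l : Fin p, (∀ i, ¬(j ∈ M i ∧ l ∈ M i)) → stmt7Hess M y x j l = 0) ∧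
    -- at a critical point whose `i`-th block vanishes, the `i`-th Hessian block is `−yᵢEᵢ`,
    -- which is negative definite on the coordinates indexed by `M i`
    (∀ x : Fin p → ℝ,
      (∀ i : Fin q, ∀ j ∈ M i, stmt7Rho M y i x * x j = 0) →
      ∀ i : Fin q, (∀ j ∈ M i, x j = 0) →
        (∀ j l : Fin p, j ∈ M i → l ∈ M i →
          stmt7Hess M y x j l = if j = l then -(y i) else 0) ∧
        (∀ v : Fin p → ℝ, v ≠ 0 → (∀ j, j ∉ M i → v j = 0) →
          v ⬝ᵥ (stmt7Hess M y x) *ᵥ v < 0)) := by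
  refine ⟨?_, ?_, ?_⟩
  · -- Part 1
    intro x v
    set A : Fin q → ℝ := fun i => stmt7Rho M y i x with hA
    set B : Fin q → ℝ := fun i => ∑ j ∈ M i, x j * v j with hB
    set C : Fin q → ℝ := fun i => ∑ j ∈ M i, (v j)^2 with hC
    have hfun : (fun s : ℝ => stmt7J M y (x + s • v))
        = fun t : ℝ => (1/4 : ℝ) * ∑ i, (A i + 2*B i*t + C i*t^2)^2 := by
      funext s
      simp only [stmt7J]
      congr 1
      refine Finset.sum_congr rfl fun i _ => ?_
      have hsum : ∑ j ∈ M i, ((x + s • v) j)^2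
          = (∑ j ∈ M i, (x j)^2) + 2*(∑ j ∈ M i, x j * v j)*s + (∑ j ∈ M i, (v j)^2)*s^2 := by
        simp only [Pi.add_apply, Pi.smul_apply, smul_eq_mul]
        rw [Finset.sum_mul, Finset.mul_sum, Finset.sum_mul, ← Finset.sum_add_distrib,
          ← Finset.sum_add_distrib]
        exact Finset.sum_congr rfl fun j _ => by ring
      simp only [stmt7Rho, hsum, hA, hB, hC]
      ring
    rw [hfun, stmt7_iterD A B C]
    -- now compute the quadratic form
    have hrhs : v ⬝ᵥ (stmt7Hess M y x) *ᵥ v = ∑ i, (A i * C i + 2 * (B i)^2) := by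
      have key : ∀ i : Fin q,
          (∑ j, ∑ l, v j * ((if j ∈ M i ∧ l ∈ M i then
              stmt7Rho M y i x * (if j = l then 1 else 0) + 2 * x j * x l else 0) * v l))
          = A i * C i + 2 * (B i)^2 := by
        intro i
        have step : ∀ j l : Fin p,
            v j * ((if j ∈ M i ∧ l ∈ M i then
              stmt7Rho M y i x * (if j = l then 1 else 0) + 2 * x j * x l else 0) * v l)
            = (if j ∈ M i then (if l ∈ M i then
                v j * ((stmt7Rho M y i x * (if j = l then 1 else 0) + 2 * x j * x l) * v l)
                else 0) else 0) := by
          intro j l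
          by_cases hj : j ∈ M i <;> by_cases hl : l ∈ M i <;> simp [hj, hl]
        simp only [step]
        have pull : (∑ j : Fin p, ∑ l : Fin p,
            (if j ∈ M i then (if l ∈ M i then
                v j * ((stmt7Rho M y i x * (if j = l then 1 else 0) + 2 * x j * x l) * v l)
                else 0) else 0))
            = ∑ j : Fin p, (if j ∈ M i then ∑ l : Fin p, (if l ∈ M i then
                v j * ((stmt7Rho M y i x * (if j = l then 1 else 0) + 2 * x j * x l) * v l)
                else 0) else 0) := by
          refine Finset.sum_congr rfl fun j _ => ?_
          by_cases hj : j ∈ M i <;> simp [hj]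
        rw [pull, Finset.sum_ite_mem, Finset.univ_inter]
        have inner : ∀ j ∈ M i,
            (∑ l, (if l ∈ M i then
                v j * ((stmt7Rho M y i x * (if j = l then 1 else 0) + 2 * x j * x l) * v l)
                else 0))
            = stmt7Rho M y i x * (v j)^2 + 2 * x j * v j * B i := by
          intro j hj
          rw [Finset.sum_ite_mem, Finset.univ_inter]
          have expand : ∀ l ∈ M i,
              v j * ((stmt7Rho M y i x * (if j = l then 1 else 0) + 2 * x j * x l) * v l)
              = (if j = l then stmt7Rho M y i x * (v j * v l) else 0) + 2 * x j * v j * (x l * v l) := by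
            intro l _
            by_cases h : j = l <;> simp [h] <;> ring
          rw [Finset.sum_congr rfl expand, Finset.sum_add_distrib, Finset.sum_ite_eq,
            if_pos hj, ← Finset.mul_sum, hB]
          ring
        rw [Finset.sum_congr rfl inner, Finset.sum_add_distrib, ← Finset.mul_sum,
          ← Finset.sum_mul]
        have h2 : (∑ j ∈ M i, 2 * x j * v j) = 2 * B i := by
          simp only [hB, Finset.mul_sum]
          exact Finset.sum_congr rfl fun j _ => by ring
        rw [h2]
        simp only [hA, hB, hC]
        ring
      have h1 : ∀ j, v j * (stmt7Hess M y x *ᵥ v) j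
          = ∑ i : Fin q, ∑ l, v j * ((if j ∈ M i ∧ l ∈ M i then
              stmt7Rho M y i x * (if j = l then 1 else 0) + 2 * x j * x l else 0) * v l) := by
        intro j
        rw [mulVec, dotProduct]
        simp only [stmt7Hess, Matrix.of_apply, Finset.sum_mul, Finset.mul_sum]
        exact Finset.sum_comm
      rw [dotProduct, Finset.sum_congr rfl fun j _ => h1 j, Finset.sum_comm]
      exact Finset.sum_congr rfl fun i _ => key i
    rw [hrhs]
  · -- Part 2
    intro x j l h
    simp only [stmt7Hess, Matrix.of_apply]
    exact Finset.sum_eq_zero fun i _ => if_neg (h i)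
  · -- Part 3
    intro x hcrit i hxi
    have hρ : stmt7Rho M y i x = -(y i) := by
      simp only [stmt7Rho]
      rw [Finset.sum_eq_zero fun j hj => by rw [hxi j hj]; ring]
      ring
    have hentries : ∀ j l : Fin p, j ∈ M i → l ∈ M i →
        stmt7Hess M y x j l = if j = l then -(y i) else 0 := by
      intro j l hj hl
      simp only [stmt7Hess, Matrix.of_apply]
      rw [Finset.sum_eq_single i]
      · rw [if_pos ⟨hj, hl⟩, hρ, hxi j hj]
        by_cases h : j = l <;> simp [h]
      · intro b _ hb
        refine if_neg (fun hc => ?_)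
        exact (Finset.disjoint_left.mp (hdisj b i hb) hc.1) hj
      · intro h; exact absurd (Finset.mem_univ i) h
    refine ⟨hentries, ?_⟩
    intro v hv hvsupp
    have hsum : v ⬝ᵥ (stmt7Hess M y x) *ᵥ v = -(y i) * ∑ j, (v j)^2 := by
      rw [dotProduct, Finset.mul_sum]
      refine Finset.sum_congr rfl fun j _ => ?_
      by_cases hj : j ∈ M i
      · have hmv : (stmt7Hess M y x *ᵥ v) j = -(y i) * v j := by
          rw [mulVec, dotProduct]
          calc ∑ l, stmt7Hess M y x j l * v l
              = ∑ l, (if j = l then -(y i) * v l else 0) := by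
                refine Finset.sum_congr rfl fun l _ => ?_
                by_cases hl : l ∈ M i
                · rw [hentries j l hj hl]
                  by_cases h : j = l <;> simp [h]
                · rw [hvsupp l hl]
                  by_cases h : j = l <;> simp [h]
            _ = -(y i) * v j := by rw [Finset.sum_ite_eq]; simp
        rw [hmv]; ring
      · rw [hvsupp j hj]; ring
    rw [hsum]
    have hpos : 0 < ∑ j, (v j)^2 := by
      obtain ⟨j, hj⟩ := Function.ne_iff.mp hv
      have hj' : v j ≠ 0 := hj
      exact Finset.sum_pos' (fun j _ => sq_nonneg _)
        ⟨j, Finset.mem_univ j, pow_two_pos_of_ne_zero hj'⟩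
    have := hy i
    nlinarith
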